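/- For any nonnegative integer m and any x in (-1,1), the normalized associated Legendre functions satisfy the three-term recurrence x² P̄^m_l(x) = c_{l-2} P̄^m_{l-2}(x) + d_l P̄^m_l(x) + c_l P̄^m_{l+2}(x) for all l ≥ m+2, where c_l = sqrt((l-m+1)(l-m+2)(l+m+1)(l+m+2) / ((2l+1)(2l+3)²(2l+5))) and d_l = (2l(l+1) - 2m² - 1) / ((2l-1)(2l+3)). -/

import Mathlib

open scoped Nat

/-- The Legendre polynomial of degree `l`, via Rodrigues' formula. -/
noncomputable def legendreP (l : ℕ) : ℝ → ℝ := fun x =>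
  (1 / (2 ^ l * (l ! : ℝ))) * iteratedDeriv l (fun y : ℝ => (y ^ 2 - 1) ^ l) x

/-- The normalized associated Legendre function `P̄_l^m`. -/
noncomputable def nalf (m l : ℕ) : ℝ → ℝ := fun x =>
  Real.sqrt ((2 * l + 1) / 2 * ((l - m)! : ℝ) / ((l + m)! : ℝ)) *
    (1 - x ^ 2) ^ ((m : ℝ) / 2) * iteratedDeriv m (legendreP l) x

/-- The spectral (l²-operator) norm of a real matrix. -/
noncomputable def specNorm {α β : Type*} [Fintype α] [Fintype β] [DecidableEq α] [DecidableEq β]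
    (A : Matrix α β ℝ) : ℝ :=
  ‖LinearMap.toContinuousLinearMap (Matrix.toEuclideanLin A)‖

/-- The singular values of a real matrix, listed in decreasing order. -/
noncomputable def singularValues {p q : ℕ} (A : Matrix (Fin p) (Fin q) ℝ) : List ℝ :=
  List.insertionSort (· ≥ ·)
    (List.ofFn fun i => Real.sqrt ((by simpa using Matrix.isHermitian_conjTranspose_mul_self A : (Matrix.transpose A * A).IsHermitian).eigenvalues i))

noncomputable def ccoef (m l : ℕ) : ℝ :=
  Real.sqrt ((((l : ℝ) - m + 1) * ((l : ℝ) - m + 2) * ((l : ℝ) + m + 1) * ((l : ℝ) + m + 2)) /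
    ((2 * (l : ℝ) + 1) * (2 * (l : ℝ) + 3) ^ 2 * (2 * (l : ℝ) + 5)))

noncomputable def dcoef (m l : ℕ) : ℝ :=
  (2 * (l : ℝ) * ((l : ℝ) + 1) - 2 * (m : ℝ) ^ 2 - 1) /
    ((2 * (l : ℝ) - 1) * (2 * (l : ℝ) + 3))

namespace ThreeTerm

open Polynomial

noncomputable def Lp (l : ℕ) : ℝ[X] :=
  C (((2:ℝ)^l * l !)⁻¹) * derivative^[l] ((X^2 - 1)^l)

lemma iterD' (q : ℝ[X]) (k : ℕ) : derivative (derivative^[k] q) = derivative^[k+1] q :=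
  (Function.iterate_succ_apply' _ _ _).symm

lemma iteratedDeriv_polyeval (p : ℝ[X]) (n : ℕ) :
    iteratedDeriv n (fun x => p.eval x) = fun x => (derivative^[n] p).eval x := by
  induction n with
  | zero => simp
  | succ n ih =>
    rw [iteratedDeriv_succ, ih]
    funext x
    rw [Function.iterate_succ_apply']
    exact (derivative^[n] p).deriv

lemma L1' (n : ℕ) (p : ℝ[X]) :
    derivative^[n+1] (X * p) = X * derivative^[n+1] p + C ((n:ℝ)+1) * derivative^[n] p := by
  induction n with
  | zero => simp [derivative_mul]; ring
  | succ n ih =>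
    rw [Function.iterate_succ_apply' derivative (n+1), ih]
    simp only [derivative_add, derivative_mul, derivative_X, derivative_C, iterD',
      derivative_natCast, derivative_one, map_add, map_one, map_natCast, map_ofNat]
    push_cast
    ring

lemma L2' (n : ℕ) (p : ℝ[X]) :
    derivative^[n+2] ((X^2-1) * p) = (X^2-1) * derivative^[n+2] p
      + C (2*(n:ℝ)+4) * (X * derivative^[n+1] p)
      + C (((n:ℝ)+2)*((n:ℝ)+1)) * derivative^[n] p := by
  induction n with
  | zero =>
    simp only [show (2:ℕ)=1+1 from rfl, Function.iterate_succ_apply', Function.iterate_one,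
      Function.iterate_zero_apply]
    simp only [derivative_mul, derivative_sub, derivative_pow,
      derivative_X, derivative_one, derivative_add, derivative_ofNat, derivative_natCast,
      derivative_zero, map_add, map_mul, map_one, map_natCast, map_ofNat]
    push_cast
    ring
  | succ n ih =>
    rw [Function.iterate_succ_apply' derivative (n+2), ih]
    simp only [derivative_add, derivative_mul, derivative_X, derivative_C, derivative_sub,
      derivative_one, derivative_pow, iterD', derivative_natCast, derivative_ofNat,
      derivative_zero, map_add, map_mul, map_one, map_natCast, map_ofNat]
    push_cast
    ring

lemma iterAdd (k : ℕ) (p q : ℝ[X]) :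
    derivative^[k] (p + q) = derivative^[k] p + derivative^[k] q := by
  induction k with
  | zero => simp
  | succ n ih => rw [Function.iterate_succ_apply', ih, derivative_add,
      Function.iterate_succ_apply', Function.iterate_succ_apply']

lemma dfl (l : ℕ) : derivative ((X^2 - 1 : ℝ[X])^(l+1))
    = C (2*(l:ℝ)+2) * (X * (X^2-1)^l) := by
  rw [derivative_pow_succ]
  simp only [derivative_sub, derivative_pow, derivative_X, derivative_one, derivative_X_pow]
  push_cast
  simp only [map_add, map_mul, map_one, map_ofNat, map_natCast]
  ring

lemma c_succ (l : ℕ) : (((2:ℝ)^(l+1) * (l+1)!)⁻¹) * (2*(l:ℝ)+2) = ((2:ℝ)^l * l !)⁻¹ := by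
  have h1 : ((l ! : ℕ) : ℝ) ≠ 0 := Nat.cast_ne_zero.2 l.factorial_ne_zero
  have h2 : ((2:ℝ)^l) ≠ 0 := by positivity
  rw [Nat.factorial_succ]
  push_cast
  field_simp
  ring

lemma idI (l : ℕ) : derivative (Lp (l+1)) = X * derivative (Lp l) + C ((l:ℝ)+1) * Lp l := by
  unfold Lp
  rw [derivative_C_mul, derivative_C_mul, iterD' _ (l+1), iterD' _ l,
    Function.iterate_succ_apply derivative (l+1), dfl, iterate_derivative_C_mul, L1']
  rw [← mul_assoc, ← C_mul, c_succ]
  ring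

lemma idStar (l : ℕ) :
    (X^2-1) * derivative (Lp l) = C ((l:ℝ)+1) * Lp (l+1) - C ((l:ℝ)+1) * (X * Lp l) := by
  cases l with
  | zero =>
    simp [Lp, Nat.factorial]
    rw [show (1+1 : ℝ[X]) = C 2 by rw [map_ofNat]; norm_num, ← mul_assoc, ← C_mul]
    norm_num
  | succ k =>
    have hE1 : derivative^[k+2] ((X^2-1:ℝ[X])^(k+2))
        = C (2*(k:ℝ)+4) * (X * derivative^[k+1] ((X^2-1:ℝ[X])^(k+1))
            + C ((k:ℝ)+1) * derivative^[k] ((X^2-1:ℝ[X])^(k+1))) := by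
      rw [Function.iterate_succ_apply derivative (k+1), dfl (k+1), iterate_derivative_C_mul,
        L1' k]
      push_cast
      ring_nf
    have hE2 : derivative^[k+2] ((X^2-1:ℝ[X])^(k+2))
        = (X^2-1) * derivative^[k+2] ((X^2-1:ℝ[X])^(k+1))
          + C (2*(k:ℝ)+4) * (X * derivative^[k+1] ((X^2-1:ℝ[X])^(k+1)))
          + C (((k:ℝ)+2)*((k:ℝ)+1)) * derivative^[k] ((X^2-1:ℝ[X])^(k+1)) := by
      rw [show ((X^2-1:ℝ[X])^(k+2)) = (X^2-1) * (X^2-1)^(k+1) by ring, L2' k]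
    have hc : C (((2:ℝ)^(k+1) * (k+1)!)⁻¹)
        = C (2*((k:ℝ)+1)+2) * C (((2:ℝ)^(k+2) * (k+2)!)⁻¹) := by
      rw [← C_mul]
      congr 1
      have := c_succ (k+1)
      push_cast at this ⊢
      linarith [this]
    unfold Lp
    rw [derivative_C_mul, iterD' _ (k+1), hc]
    push_cast
    simp only [map_add, map_mul, map_one, map_ofNat, map_natCast] at hE1 hE2 ⊢
    linear_combination ((((k:ℕ):ℝ[X])+2) * C (((2:ℝ)^(k+2) * (k+2)!)⁻¹)) * hE1
      - ((2*(((k:ℕ):ℝ[X]))+4) * C (((2:ℝ)^(k+2) * (k+2)!)⁻¹)) * hE2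

lemma bonnet (l : ℕ) : C ((l:ℝ)+2) * Lp (l+2) =
    C (2*(l:ℝ)+3) * (X * Lp (l+1)) - C ((l:ℝ)+1) * Lp l := by
  have A := idStar (l+1)
  have B := idI l
  have C0 := idStar l
  push_cast at A
  simp only [map_add, map_mul, map_one, map_ofNat, map_natCast] at A B C0 ⊢
  linear_combination (-1 : ℝ[X]) * A + (X^2-1) * B + X * C0

lemma derivId (l : ℕ) : derivative (Lp (l+2))
    = derivative (Lp l) + C (2*(l:ℝ)+3) * Lp (l+1) := by
  have A := idI (l+1)
  have B := idI l
  have C0 := idStar l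
  push_cast at A
  simp only [map_add, map_mul, map_one, map_ofNat, map_natCast] at A B C0 ⊢
  linear_combination A + X * B + C0

lemma qrec (m l : ℕ) : C ((l:ℝ)+2-m) * derivative^[m] (Lp (l+2))
    = C (2*(l:ℝ)+3) * (X * derivative^[m] (Lp (l+1)))
      - C ((l:ℝ)+1+m) * derivative^[m] (Lp l) := by
  cases m with
  | zero =>
    simpa using bonnet l
  | succ k =>
    have H1 := congrArg (fun p => derivative^[k+1] p) (bonnet l)
    have H2 := congrArg (fun p => derivative^[k] p) (derivId l)
    simp only [iterAdd, iterate_derivative_sub, iterate_derivative_C_mul,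
      L1' k, ← Function.iterate_succ_apply] at H1 H2
    push_cast
    simp only [map_add, map_mul, map_one, map_sub, map_ofNat, map_natCast] at H1 H2 ⊢
    linear_combination H1 - ((((k:ℕ):ℝ[X]))+1) * H2

lemma legendre_eq (l : ℕ) : legendreP l = fun x => (Lp l).eval x := by
  funext x
  unfold legendreP Lp
  have h : (fun y : ℝ => (y ^ 2 - 1) ^ l) = fun y => (((X^2-1:ℝ[X])^l)).eval y := by
    funext y; simp
  rw [h, iteratedDeriv_polyeval]
  simp [one_div]

lemma iter_nalf (m l : ℕ) (x : ℝ) :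
    iteratedDeriv m (legendreP l) x = (derivative^[m] (Lp l)).eval x := by
  rw [legendre_eq, iteratedDeriv_polyeval]

lemma qrecEval (m l : ℕ) (x : ℝ) :
    ((l:ℝ)+2-m) * iteratedDeriv m (legendreP (l+2)) x
      = (2*(l:ℝ)+3) * (x * iteratedDeriv m (legendreP (l+1)) x)
        - ((l:ℝ)+1+m) * iteratedDeriv m (legendreP l) x := by
  have := congrArg (fun p => p.eval x) (qrec m l)
  simp only [eval_mul, eval_sub, eval_add, eval_C, eval_X, iter_nalf] at this ⊢
  linarith [this]


noncomputable def Nc (m l : ℕ) : ℝ :=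
  Real.sqrt ((2 * l + 1) / 2 * ((l - m)! : ℝ) / ((l + m)! : ℝ))

noncomputable def aco (m l : ℕ) : ℝ :=
  Real.sqrt ((((l:ℝ)-m+1)*((l:ℝ)+m+1))/((2*(l:ℝ)+1)*(2*(l:ℝ)+3)))

lemma nalf_eq' (m l : ℕ) (x : ℝ) :
    nalf m l x = Nc m l * (1 - x ^ 2) ^ ((m : ℝ) / 2) * iteratedDeriv m (legendreP l) x := rfl

lemma sqrt_helper {S c r a T : ℝ} (hc : 0 ≤ c) (hr : 0 ≤ r) (ha : 0 ≤ a)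
    (h : S * c^2 = r^2 * (a * T)) :
    Real.sqrt S * c = r * (Real.sqrt a * Real.sqrt T) := by
  rw [← Real.sqrt_sq hc, ← Real.sqrt_mul' S (sq_nonneg c), h, Real.sqrt_mul (sq_nonneg r),
    Real.sqrt_sq hr, Real.sqrt_mul ha]

lemma fact_ne (n : ℕ) : ((n ! : ℕ) : ℝ) ≠ 0 := Nat.cast_ne_zero.2 n.factorial_ne_zero

lemma hA (m k : ℕ) : Nc m (m+k+1) * ((k:ℝ)+2)
    = (2*(m:ℝ)+2*(k:ℝ)+3) * (aco m (m+k+1) * Nc m (m+k+2)) := by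
  unfold Nc aco
  rw [show m+k+1-m = k+1 from by omega, show m+k+2-m = k+2 from by omega]
  have f1 : (((k+2)! : ℕ) : ℝ) = ((k:ℝ)+2) * ((k+1)! : ℕ) := by
    rw [show k+2 = (k+1)+1 from rfl, Nat.factorial_succ]; push_cast; ring
  have f2 : (((m+k+2+m)! : ℕ) : ℝ) = (2*(m:ℝ)+(k:ℝ)+2) * ((m+k+1+m)! : ℕ) := by
    rw [show m+k+2+m = (m+k+1+m)+1 from by omega, Nat.factorial_succ]; push_cast; ring
  apply sqrt_helper (by positivity) (by positivity)
  · have e : (((m+k+1:ℕ):ℝ) - m + 1) * (((m+k+1:ℕ):ℝ) + m + 1)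
        / ((2*((m+k+1:ℕ):ℝ)+1) * (2*((m+k+1:ℕ):ℝ)+3))
        = ((k:ℝ)+2)*(2*(m:ℝ)+(k:ℝ)+2) / ((2*(m:ℝ)+2*(k:ℝ)+3)*(2*(m:ℝ)+2*(k:ℝ)+5)) := by
      push_cast; ring
    rw [e]; positivity
  · rw [f1, f2]
    have h1 := fact_ne (m+k+1+m)
    have h2 : (2*(m:ℝ)+(k:ℝ)+2) ≠ 0 := by positivity
    have h3 : (2*(m:ℝ)+2*(k:ℝ)+3) ≠ 0 := by positivity
    have h4 : (2*(m:ℝ)+2*(k:ℝ)+5) ≠ 0 := by positivity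
    push_cast
    field_simp
    ring

lemma hB (m k : ℕ) : Nc m (m+k+1) * (2*(m:ℝ)+(k:ℝ)+1)
    = (2*(m:ℝ)+2*(k:ℝ)+3) * (aco m (m+k) * Nc m (m+k)) := by
  unfold Nc aco
  rw [show m+k+1-m = k+1 from by omega, show m+k-m = k from by omega]
  have f1 : (((k+1)! : ℕ) : ℝ) = ((k:ℝ)+1) * (k ! : ℕ) := by
    rw [Nat.factorial_succ]; push_cast; ring
  have f2 : (((m+k+1+m)! : ℕ) : ℝ) = (2*(m:ℝ)+(k:ℝ)+1) * ((m+k+m)! : ℕ) := by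
    rw [show m+k+1+m = (m+k+m)+1 from by omega, Nat.factorial_succ]; push_cast; ring
  apply sqrt_helper (by positivity) (by positivity)
  · have e : (((m+k:ℕ):ℝ) - m + 1) * (((m+k:ℕ):ℝ) + m + 1)
        / ((2*((m+k:ℕ):ℝ)+1) * (2*((m+k:ℕ):ℝ)+3))
        = ((k:ℝ)+1)*(2*(m:ℝ)+(k:ℝ)+1) / ((2*(m:ℝ)+2*(k:ℝ)+1)*(2*(m:ℝ)+2*(k:ℝ)+3)) := by
      push_cast; ring
    rw [e]; positivity
  · rw [f1, f2]
    have h1 := fact_ne (m+k+m)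
    have h2 : (2*(m:ℝ)+(k:ℝ)+1) ≠ 0 := by positivity
    have h3 : (2*(m:ℝ)+2*(k:ℝ)+1) ≠ 0 := by positivity
    have h4 : (2*(m:ℝ)+2*(k:ℝ)+3) ≠ 0 := by positivity
    push_cast
    field_simp
    ring

lemma onestep (m k : ℕ) (x : ℝ) :
    x * nalf m (m+k+1) x
      = aco m (m+k) * nalf m (m+k) x + aco m (m+k+1) * nalf m (m+k+2) x := by
  have hq := ThreeTerm.qrecEval m (m+k) x
  have h3 : (2*(m:ℝ)+2*(k:ℝ)+3) ≠ 0 := by positivity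
  apply mul_left_cancel₀ h3
  simp only [nalf_eq']
  push_cast at hq
  linear_combination (-(((1-x^2) ^ ((m:ℝ)/2)) * Nc m (m+k+1))) * hq
    + (((1-x^2) ^ ((m:ℝ)/2)) * iteratedDeriv m (legendreP (m+k+2)) x) * hA m k
    + (((1-x^2) ^ ((m:ℝ)/2)) * iteratedDeriv m (legendreP (m+k)) x) * hB m k

lemma hC1 (m j : ℕ) : aco m (m+j+1) * aco m (m+j) = ccoef m (m+j) := by
  unfold aco ccoef
  rw [← Real.sqrt_mul (by
    have e : (((m+j+1:ℕ):ℝ) - m + 1) * (((m+j+1:ℕ):ℝ) + m + 1)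
        / ((2*((m+j+1:ℕ):ℝ)+1) * (2*((m+j+1:ℕ):ℝ)+3))
        = ((j:ℝ)+2)*(2*(m:ℝ)+(j:ℝ)+2) / ((2*(m:ℝ)+2*(j:ℝ)+3)*(2*(m:ℝ)+2*(j:ℝ)+5)) := by
      push_cast; ring
    rw [e]; positivity)]
  congr 1
  have h1 : (2*(m:ℝ)+2*(j:ℝ)+1) ≠ 0 := by positivity
  have h2 : (2*(m:ℝ)+2*(j:ℝ)+3) ≠ 0 := by positivity
  have h3 : (2*(m:ℝ)+2*(j:ℝ)+5) ≠ 0 := by positivity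
  push_cast
  field_simp
  ring

lemma hC2 (m j : ℕ) : aco m (m+j+1)^2 + aco m (m+j+2)^2 = dcoef m (m+j+2) := by
  unfold aco dcoef
  rw [Real.sq_sqrt (by
    have e : (((m+j+1:ℕ):ℝ) - m + 1) * (((m+j+1:ℕ):ℝ) + m + 1)
        / ((2*((m+j+1:ℕ):ℝ)+1) * (2*((m+j+1:ℕ):ℝ)+3))
        = ((j:ℝ)+2)*(2*(m:ℝ)+(j:ℝ)+2) / ((2*(m:ℝ)+2*(j:ℝ)+3)*(2*(m:ℝ)+2*(j:ℝ)+5)) := by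
      push_cast; ring
    rw [e]; positivity),
    Real.sq_sqrt (by
    have e : (((m+j+2:ℕ):ℝ) - m + 1) * (((m+j+2:ℕ):ℝ) + m + 1)
        / ((2*((m+j+2:ℕ):ℝ)+1) * (2*((m+j+2:ℕ):ℝ)+3))
        = ((j:ℝ)+3)*(2*(m:ℝ)+(j:ℝ)+3) / ((2*(m:ℝ)+2*(j:ℝ)+5)*(2*(m:ℝ)+2*(j:ℝ)+7)) := by
      push_cast; ring
    rw [e]; positivity)]
  have h1 : (2*(m:ℝ)+2*(j:ℝ)+3) ≠ 0 := by positivity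
  have h2 : (2*(m:ℝ)+2*(j:ℝ)+5) ≠ 0 := by positivity
  have h3 : (2*(m:ℝ)+2*(j:ℝ)+7) ≠ 0 := by positivity
  have h4 : 2*((m+j+2:ℕ):ℝ) - 1 = 2*(m:ℝ)+2*(j:ℝ)+3 := by push_cast; ring
  have h5 : 2*((m+j+2:ℕ):ℝ) + 3 = 2*(m:ℝ)+2*(j:ℝ)+7 := by push_cast; ring
  rw [h4, h5]
  push_cast
  field_simp
  ring

end ThreeTerm

theorem three_term_recurrence (m : ℕ) (x : ℝ) (hx : x ∈ Set.Ioo (-1 : ℝ) 1)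
    (l : ℕ) (hl : m + 2 ≤ l) :
    x ^ 2 * nalf m l x
      = ccoef m (l - 2) * nalf m (l - 2) x + dcoef m l * nalf m l x
        + ccoef m l * nalf m (l + 2) x := by
  obtain ⟨j, rfl⟩ : ∃ j, l = m + j + 2 := ⟨l - m - 2, by omega⟩
  rw [show m + j + 2 - 2 = m + j from by omega, show m + j + 2 + 2 = m + j + 4 from by omega]
  have O0 := ThreeTerm.onestep m j x
  have O1 := ThreeTerm.onestep m (j+1) x
  have O2 := ThreeTerm.onestep m (j+2) x
  rw [show m+(j+1) = m+j+1 from by omega, show m+j+1+1 = m+j+2 from by omega,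
    show m+j+1+2 = m+j+3 from by omega] at O1
  rw [show m+(j+2) = m+j+2 from by omega, show m+j+2+1 = m+j+3 from by omega,
    show m+j+2+2 = m+j+4 from by omega] at O2
  have C1 := ThreeTerm.hC1 m j
  have C2 := ThreeTerm.hC2 m j
  have C3 := ThreeTerm.hC1 m (j+2)
  rw [show m+(j+2)+1 = m+j+3 from by omega, show m+(j+2) = m+j+2 from by omega] at C3
  linear_combination x * O1 + ThreeTerm.aco m (m+j+1) * O0 + ThreeTerm.aco m (m+j+2) * O2
    + nalf m (m+j) x * C1 + nalf m (m+j+2) x * C2 + nalf m (m+j+4) x * C3
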